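/- Let a < b be real numbers and let f : ℝ → ℝ be continuously differentiable on [a,b]. If f attains a global minimum over [a,b] at some interior point t* ∈ (a,b), then D^α_{*a} f(t*) ≤ 0 for all α ∈ (0,1). -/

import Mathlib

open MeasureTheory Filter Set intervalIntegral

/-- The Caputo fractional derivative of order `α` with starting point `a`:
`D^α_{*a} f(t) = (1/Γ(1-α)) ∫_a^t (t-s)^(-α) f'(s) ds`. -/
noncomputable def caputoDeriv (a α : ℝ) (f : ℝ → ℝ) (t : ℝ) : ℝ :=
  (Real.Gamma (1 - α))⁻¹ * ∫ s in a..t, (t - s) ^ (-α) * deriv f s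

theorem caputo_nonpos_at_global_min (a b : ℝ) (hab : a < b) (f : ℝ → ℝ)
    (hf : ContDiffOn ℝ 1 f (Set.Icc a b))
    (tstar : ℝ) (htstar : tstar ∈ Set.Ioo a b)
    (hmin : ∀ t ∈ Set.Icc a b, f tstar ≤ f t) :
    ∀ α ∈ Set.Ioo (0 : ℝ) 1, caputoDeriv a α f tstar ≤ 0 := by
  rintro α ⟨hα0, hα1⟩
  obtain ⟨h1, h2⟩ := htstar
  have hΓ : 0 < Real.Gamma (1 - α) := Real.Gamma_pos_of_pos (by linarith)
  set φ : ℝ → ℝ := fun s => (tstar - s) ^ (-α) * deriv f s with hφdef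
  -- differentiability at interior points
  have hdiff : ∀ s ∈ Set.Ioo a b, HasDerivAt f (deriv f s) s := by
    intro s hs
    have : DifferentiableAt ℝ f s :=
      ((hf.differentiableOn one_ne_zero).differentiableAt (Icc_mem_nhds hs.1 hs.2))
    exact this.hasDerivAt
  -- continuity of the derivative
  have hdW : ContinuousOn (derivWithin f (Set.Icc a b)) (Set.Icc a b) :=
    hf.continuousOn_derivWithin (uniqueDiffOn_Icc hab) le_rfl
  have hderiv_eq : ∀ s ∈ Set.Ioo a b, derivWithin f (Set.Icc a b) s = deriv f s := by
    intro s hs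
    exact derivWithin_of_mem_nhds (Icc_mem_nhds hs.1 hs.2)
  have hcont' : ContinuousOn (deriv f) (Set.Ioo a b) :=
    (hdW.mono Set.Ioo_subset_Icc_self).congr fun s hs => (hderiv_eq s hs).symm
  -- a bound for the derivative
  obtain ⟨C, hC⟩ := isCompact_Icc.exists_bound_of_continuousOn hdW
  -- integrability of φ on Ioc a tstar
  have hmaj : IntervalIntegrable (fun s => (tstar - s) ^ (-α)) volume a tstar := by
    have h0 : IntervalIntegrable (fun x : ℝ => x ^ (-α)) volume 0 (tstar - a) :=
      intervalIntegrable_rpow' (by linarith)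
    have := (h0.comp_sub_left tstar).symm
    simpa using this
  have hmajIoc : IntegrableOn (fun s => (tstar - s) ^ (-α)) (Set.Ioc a tstar) :=
    (intervalIntegrable_iff_integrableOn_Ioc_of_le h1.le).mp hmaj
  have hφmeas : AEStronglyMeasurable φ (volume.restrict (Set.Ioc a tstar)) := by
    apply Measurable.aestronglyMeasurable
    exact ((measurable_const.sub measurable_id).pow measurable_const).mul (measurable_deriv f)
  have hφint : IntegrableOn φ (Set.Ioc a tstar) := by
    refine Integrable.mono' (g := fun s => (C + 1) * (tstar - s) ^ (-α))
      (hmajIoc.const_mul _) hφmeas ?_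
    filter_upwards [ae_restrict_mem measurableSet_Ioc] with s hs
    rcases eq_or_lt_of_le hs.2 with h | h
    · subst h
      simp [hφdef, Real.zero_rpow (by linarith : -α ≠ 0)]
    · have hsIoo : s ∈ Set.Ioo a b := ⟨hs.1, lt_trans h h2⟩
      have hb : |deriv f s| ≤ C := by
        have := hC s (Set.Ioo_subset_Icc_self hsIoo)
        rwa [← hderiv_eq s hsIoo]
      have hnn : (0:ℝ) ≤ (tstar - s) ^ (-α) := Real.rpow_nonneg (by linarith) _
      calc ‖φ s‖ = (tstar - s) ^ (-α) * |deriv f s| := by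
            rw [hφdef]; simp [abs_mul, abs_of_nonneg hnn]
        _ ≤ (tstar - s) ^ (-α) * (C + 1) := by
            apply mul_le_mul_of_nonneg_left (by linarith) hnn
        _ = (C + 1) * (tstar - s) ^ (-α) := by ring
  -- key inequality via integration by parts on [a+ε, tstar-ε]
  have hIBP : ∀ ε : ℝ, 0 < ε → a + ε ≤ tstar - ε →
      (∫ s in (a+ε)..(tstar-ε), φ s) ≤ ε ^ (-α) * (f (tstar - ε) - f tstar) := by
    intro ε hε hle
    have hsub : Set.uIcc (a+ε) (tstar-ε) ⊆ Set.Ioo a b := by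
      rw [Set.uIcc_of_le hle]
      intro x hx
      exact ⟨by linarith [hx.1], by linarith [hx.2]⟩
    have hu : ∀ x ∈ Set.uIcc (a+ε) (tstar-ε),
        HasDerivAt (fun s => (tstar - s) ^ (-α)) (α * (tstar - x) ^ (-α - 1)) x := by
      intro x hx
      have hxle : x ≤ tstar - ε := ((Set.uIcc_of_le hle ▸ hx).2)
      have hpos : 0 < tstar - x := by linarith
      have hout : HasDerivAt (fun y : ℝ => y ^ (-α)) (-α * (tstar - x) ^ (-α - 1)) (tstar - x) :=
        Real.hasDerivAt_rpow_const (Or.inl (ne_of_gt hpos))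
      have hin : HasDerivAt (fun s : ℝ => tstar - s) (-1) x := by
        simpa using (hasDerivAt_id x).const_sub tstar
      have := hout.comp x hin
      exact this.congr_deriv (by ring)
    have hv : ∀ x ∈ Set.uIcc (a+ε) (tstar-ε),
        HasDerivAt (fun s => f s - f tstar) (deriv f x) x :=
      fun x hx => (hdiff x (hsub hx)).sub_const _
    have hu' : IntervalIntegrable (fun x => α * (tstar - x) ^ (-α - 1)) volume (a+ε) (tstar-ε) := by
      apply ContinuousOn.intervalIntegrable
      apply ContinuousOn.const_smul (c := α) ?_ |>.congr (fun x _ => rfl)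
      refine ContinuousOn.rpow_const ?_ ?_
      · exact (continuous_const.sub continuous_id).continuousOn
      · intro x hx
        have hxle : x ≤ tstar - ε := ((Set.uIcc_of_le hle ▸ hx).2)
        exact Or.inl (by intro h; linarith)
    have hv' : IntervalIntegrable (deriv f) volume (a+ε) (tstar-ε) :=
      (hcont'.mono hsub).intervalIntegrable
    have hparts := intervalIntegral.integral_mul_deriv_eq_deriv_mul hu hv hu' hv'
    -- the boundary term at tstar - ε
    have hb1 : (tstar - (tstar - ε)) = ε := by ring
    -- nonnegativity of dropped terms
    have hterm2 : 0 ≤ (tstar - (a+ε)) ^ (-α) * (f (a+ε) - f tstar) := by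
      apply mul_nonneg (Real.rpow_nonneg (by linarith) _)
      have : a + ε ∈ Set.Icc a b := ⟨by linarith, by linarith⟩
      linarith [hmin _ this]
    have hterm3 : 0 ≤ ∫ x in (a+ε)..(tstar-ε), α * (tstar - x) ^ (-α-1) * (f x - f tstar) := by
      apply intervalIntegral.integral_nonneg hle
      intro u hu'
      have huIcc : u ∈ Set.Icc a b := ⟨by linarith [hu'.1], by linarith [hu'.2]⟩
      have hnn : 0 ≤ (tstar - u) ^ (-α-1) := Real.rpow_nonneg (by linarith [hu'.2]) _
      have := hmin u huIcc
      exact mul_nonneg (mul_nonneg hα0.le hnn) (by linarith)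
    calc (∫ s in (a+ε)..(tstar-ε), φ s)
        = (tstar - (tstar-ε)) ^ (-α) * (f (tstar-ε) - f tstar)
          - (tstar - (a+ε)) ^ (-α) * (f (a+ε) - f tstar)
          - ∫ x in (a+ε)..(tstar-ε), α * (tstar - x) ^ (-α-1) * (f x - f tstar) := hparts
      _ ≤ (tstar - (tstar-ε)) ^ (-α) * (f (tstar-ε) - f tstar) := by linarith
      _ = ε ^ (-α) * (f (tstar - ε) - f tstar) := by rw [hb1]
  -- the bound tends to 0
  have hbound0 : Tendsto (fun ε : ℝ => ε ^ (-α) * (f (tstar - ε) - f tstar))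
      (nhdsWithin 0 (Set.Ioi 0)) (nhds 0) := by
    have hd : HasDerivAt f (deriv f tstar) tstar := hdiff tstar ⟨h1, h2⟩
    have hslope : Tendsto (slope f tstar) (nhdsWithin tstar {tstar}ᶜ) (nhds (deriv f tstar)) :=
      hasDerivAt_iff_tendsto_slope.mp hd
    have hmap : Tendsto (fun ε : ℝ => tstar - ε) (nhdsWithin 0 (Set.Ioi 0))
        (nhdsWithin tstar {tstar}ᶜ) := by
      rw [tendsto_nhdsWithin_iff]
      constructor
      · have : Tendsto (fun ε : ℝ => tstar - ε) (nhds 0) (nhds (tstar - 0)) :=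
          (continuous_const.sub continuous_id).tendsto 0
        simpa using this.mono_left nhdsWithin_le_nhds
      · filter_upwards [self_mem_nhdsWithin] with ε (hε : 0 < ε)
        simp only [Set.mem_compl_iff, Set.mem_singleton_iff]
        intro h; linarith [sub_eq_self.mp h]
    have hsl2 : Tendsto (fun ε : ℝ => slope f tstar (tstar - ε)) (nhdsWithin 0 (Set.Ioi 0))
        (nhds (deriv f tstar)) := hslope.comp hmap
    have hpow : Tendsto (fun ε : ℝ => -(ε ^ (1 - α))) (nhdsWithin 0 (Set.Ioi 0)) (nhds 0) := by
      have hc : ContinuousAt (fun x : ℝ => x ^ (1 - α)) 0 :=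
        Real.continuousAt_rpow_const 0 (1-α) (Or.inr (by linarith))
      have h0 : Tendsto (fun x : ℝ => x ^ (1 - α)) (nhdsWithin (0:ℝ) (Set.Ioi 0))
          (nhds ((0:ℝ) ^ (1 - α))) := hc.tendsto.mono_left nhdsWithin_le_nhds
      have := h0.neg
      simpa [Real.zero_rpow (by linarith : (1:ℝ) - α ≠ 0)] using this
    have := hsl2.mul hpow
    rw [mul_zero] at this
    refine this.congr' ?_
    filter_upwards [self_mem_nhdsWithin] with ε (hε : 0 < ε)
    have hεα : ε ^ ((1:ℝ) - α) = ε ^ (-α) * ε := by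
      rw [show (1:ℝ) - α = -α + 1 by ring, Real.rpow_add hε, Real.rpow_one]
    rw [slope_def_field, show tstar - ε - tstar = -ε from by ring, hεα]
    field_simp
  -- the truncated integrals tend to the full integral (dominated convergence)
  set μ := volume.restrict (Set.Ioc a tstar) with hμ
  have hDCT : Tendsto (fun ε : ℝ => ∫ s, (Set.Ioc (a+ε) (tstar-ε)).indicator φ s ∂μ)
      (nhdsWithin 0 (Set.Ioi 0)) (nhds (∫ s, φ s ∂μ)) := by
    apply MeasureTheory.tendsto_integral_filter_of_dominated_convergence (fun s => ‖φ s‖)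
    · filter_upwards with ε
      exact hφmeas.indicator measurableSet_Ioc
    · filter_upwards with ε
      filter_upwards with s
      exact norm_indicator_le_norm_self φ s
    · exact hφint.norm
    · have hmem : ∀ᵐ s ∂μ, s ∈ Set.Ioc a tstar := ae_restrict_mem measurableSet_Ioc
      have hne : ∀ᵐ s ∂μ, s ≠ tstar := by
        refine ae_restrict_of_ae ?_
        rw [MeasureTheory.ae_iff]
        have : {s : ℝ | ¬ s ≠ tstar} = {tstar} := by ext x; simp
        rw [this]
        exact Real.volume_singleton
      filter_upwards [hmem, hne] with s hs hsne
      have hsIoo : s ∈ Set.Ioo a tstar := ⟨hs.1, lt_of_le_of_ne hs.2 hsne⟩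
      apply tendsto_const_nhds.congr'
      have hmm : Set.Ioo (0:ℝ) (min (s - a) (tstar - s)) ∈ nhdsWithin (0:ℝ) (Set.Ioi 0) :=
        Ioo_mem_nhdsGT_of_mem ⟨le_refl 0, lt_min (by linarith [hsIoo.1]) (by linarith [hsIoo.2])⟩
      filter_upwards [hmm] with ε hε
      have h1' : a + ε < s := by have := lt_of_lt_of_le hε.2 (min_le_left _ _); linarith
      have h2' : s ≤ tstar - ε := by have := lt_of_lt_of_le hε.2 (min_le_right _ _); linarith
      have hmem' : s ∈ Set.Ioc (a+ε) (tstar-ε) := ⟨h1', h2'⟩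
      rw [Set.indicator_of_mem hmem']
  -- rewrite both sides
  have hfull : (∫ s, φ s ∂μ) = ∫ s in a..tstar, φ s := by
    rw [intervalIntegral.integral_of_le h1.le]
  have hε_small : ∀ᶠ ε in nhdsWithin (0:ℝ) (Set.Ioi 0),
      0 < ε ∧ ε < (tstar - a)/2 := by
    have hmm : Set.Ioo (0:ℝ) ((tstar - a)/2) ∈ nhdsWithin (0:ℝ) (Set.Ioi 0) :=
      Ioo_mem_nhdsGT_of_mem ⟨le_refl 0, by linarith⟩
    filter_upwards [hmm] with ε hε
    exact ⟨hε.1, hε.2⟩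
  have hkey : (∫ s in a..tstar, φ s) ≤ 0 := by
    rw [← hfull]
    refine le_of_tendsto_of_tendsto hDCT hbound0 ?_
    filter_upwards [hε_small] with ε hεpair
    obtain ⟨hε, hεs⟩ := hεpair
    have hle : a + ε ≤ tstar - ε := by linarith
    have hsubset : Set.Ioc (a+ε) (tstar-ε) ⊆ Set.Ioc a tstar :=
      Set.Ioc_subset_Ioc (by linarith) (by linarith)
    have heq : (∫ s, (Set.Ioc (a+ε) (tstar-ε)).indicator φ s ∂μ)
        = ∫ s in (a+ε)..(tstar-ε), φ s := by
      rw [MeasureTheory.integral_indicator measurableSet_Ioc, hμ,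
        MeasureTheory.Measure.restrict_restrict measurableSet_Ioc,
        Set.inter_eq_self_of_subset_left hsubset,
        intervalIntegral.integral_of_le hle]
    rw [heq]
    exact hIBP ε hε hle
  rw [caputoDeriv]
  have := mul_le_mul_of_nonneg_left hkey (inv_nonneg.mpr hΓ.le)
  simpa using this
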